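/- The function g(t) = (t²(4 + log 8) − 2t²·log t + log(8/t²) − t·log 4 − 4)/(t − 1) is increasing on [5/2, 4], satisfies 0 ≤ g'(t) ≤ 1 there, and g(5/2) ≥ 25/2. -/

import Mathlib

private lemma hd19 (t : ℝ) (ht : 2 ≤ t) :
    HasDerivAt (fun t : ℝ =>
        (t ^ 2 * (4 + Real.log 8) - 2 * t ^ 2 * Real.log t + Real.log (8 / t ^ 2)
          - t * Real.log 4 - 4) / (t - 1))
      (((2*t*(4+Real.log 8) - (4*t*Real.log t + 2*t) - 2/t - Real.log 4)*(t-1)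
        - (t^2*(4+Real.log 8) - 2*t^2*Real.log t + (Real.log 8 - 2*Real.log t)
          - t*Real.log 4 - 4))/(t-1)^2) t := by
  have ht0 : t ≠ 0 := by positivity
  have htpos : (0:ℝ) < t := by linarith
  have ht1 : t - 1 ≠ 0 := by intro h; nlinarith
  have h8 : (8:ℝ)/t^2 ≠ 0 := by positivity
  have ha : HasDerivAt (fun y : ℝ => y^2 * (4 + Real.log 8)) ((2*t^1) * (4 + Real.log 8)) t := by
    simpa using (hasDerivAt_pow 2 t).mul_const (4 + Real.log 8)
  have hb : HasDerivAt (fun y : ℝ => 2*y^2*Real.log y)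
      ((2*(2*t^1)) * Real.log t + (2*t^2) * t⁻¹) t :=
    ((hasDerivAt_pow 2 t).const_mul 2).mul (Real.hasDerivAt_log ht0)
  have hinner : HasDerivAt (fun y : ℝ => 8/y^2) ((0 * t^2 - 8 * (2*t^1))/(t^2)^2) t :=
    (hasDerivAt_const t 8).div (hasDerivAt_pow 2 t) (by positivity)
  have hc : HasDerivAt (fun y : ℝ => Real.log (8/y^2))
      ((8/t^2)⁻¹ * ((0 * t^2 - 8 * (2*t^1))/(t^2)^2)) t := by
    have := (Real.hasDerivAt_log h8).comp t hinner
    exact this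
  have hdd : HasDerivAt (fun y : ℝ => y * Real.log 4) (1 * Real.log 4) t :=
    (hasDerivAt_id t).mul_const (Real.log 4)
  have hN : HasDerivAt (fun y : ℝ => y ^ 2 * (4 + Real.log 8) - 2 * y ^ 2 * Real.log y
      + Real.log (8 / y ^ 2) - y * Real.log 4 - 4)
      (((2*t^1) * (4 + Real.log 8) - ((2*(2*t^1)) * Real.log t + (2*t^2) * t⁻¹)
        + (8/t^2)⁻¹ * ((0 * t^2 - 8 * (2*t^1))/(t^2)^2) - 1 * Real.log 4)) t :=
    ((((ha.sub hb).add hc).sub hdd).sub_const 4)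
  have hden : HasDerivAt (fun y : ℝ => y - 1) 1 t := (hasDerivAt_id t).sub_const 1
  have := hN.div hden ht1
  refine this.congr_deriv ?_
  have hlog : Real.log (8/t^2) = Real.log 8 - 2*Real.log t := by
    rw [Real.log_div (by norm_num) (pow_ne_zero _ ht0), Real.log_pow]
    push_cast; ring
  rw [hlog]
  field_simp
  ring

private lemma hbound19 (t L g3 u v : ℝ) (ht : 5/2 ≤ t) (ht4 : t ≤ 4)
    (hL1 : 0.6931 ≤ L) (hL2 : L ≤ 0.6932)
    (hg3 : (3*L + 1/9)/2 ≤ g3)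
    (hv : v * t = 2)
    (hu1 : g3 + 1 - (3/2)*v ≤ u) (hu2 : u ≤ 2*L + t/4 - 1) :
    0 ≤ (2*t*(4+3*L) - (4*t*u + 2*t) - v - 2*L)*(t-1)
        - (t^2*(4+3*L) - 2*t^2*u + (3*L - 2*u) - t*(2*L) - 4) ∧
    (2*t*(4+3*L) - (4*t*u + 2*t) - v - 2*L)*(t-1)
        - (t^2*(4+3*L) - 2*t^2*u + (3*L - 2*u) - t*(2*L) - 4) ≤ (t-1)^2 := by
  have htpos : (0:ℝ) < t := by linarith
  have hvt2 : v * t^2 = 2*t := by rw [pow_two, ← mul_assoc, hv]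
  have hv1 : 1/2 ≤ v := by nlinarith
  have hv2 : v ≤ 4/5 := by nlinarith
  have hc : (0:ℝ) ≤ 2*t^2 - 4*t - 2 := by nlinarith
  constructor
  · nlinarith [mul_le_mul_of_nonneg_left hu2 hc,
      sq_nonneg (t-3), sq_nonneg (t-5/2), sq_nonneg (4-t),
      mul_nonneg (sub_nonneg.2 hL1) (sq_nonneg (t-3)),
      mul_nonneg (by linarith : (0:ℝ) ≤ 4 - t) (by linarith : (0:ℝ) ≤ t - 5/2)]
  · nlinarith [mul_le_mul_of_nonneg_left hu1 hc,
      sq_nonneg (t-3), sq_nonneg (t-5/2), sq_nonneg (4-t),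
      mul_nonneg (by linarith : (0:ℝ) ≤ 4 - t) (by linarith : (0:ℝ) ≤ t - 5/2),
      mul_nonneg (sub_nonneg.2 hg3) hc, hvt2, hv]

private lemma deriv19 (t : ℝ) (ht : t ∈ Set.Icc (5/2 : ℝ) 4) :
    0 ≤ deriv (fun t : ℝ =>
        (t ^ 2 * (4 + Real.log 8) - 2 * t ^ 2 * Real.log t + Real.log (8 / t ^ 2)
          - t * Real.log 4 - 4) / (t - 1)) t ∧
    deriv (fun t : ℝ =>
        (t ^ 2 * (4 + Real.log 8) - 2 * t ^ 2 * Real.log t + Real.log (8 / t ^ 2)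
          - t * Real.log 4 - 4) / (t - 1)) t ≤ 1 := by
  obtain ⟨ht1, ht2⟩ := ht
  have htpos : (0:ℝ) < t := by linarith
  have hde := (hd19 t (by linarith)).deriv
  rw [hde]
  have h8 : Real.log 8 = 3 * Real.log 2 := by
    rw [show (8:ℝ) = 2^3 by norm_num, Real.log_pow]; push_cast; ring
  have h4 : Real.log 4 = 2 * Real.log 2 := by
    rw [show (4:ℝ) = 2^2 by norm_num, Real.log_pow]; push_cast; ring
  have hL1 : (0.6931:ℝ) ≤ Real.log 2 := le_of_lt (by
    have := Real.log_two_gt_d9; linarith)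
  have hL2 : Real.log 2 ≤ 0.6932 := le_of_lt (by
    have := Real.log_two_lt_d9; linarith)
  have hg3 : (3*Real.log 2 + 1/9)/2 ≤ Real.log 3 := by
    have h98 : (1:ℝ)/9 ≤ Real.log (9/8) := by
      have := Real.log_le_sub_one_of_pos (show (0:ℝ) < (9/8)⁻¹ by norm_num)
      rw [Real.log_inv] at this
      norm_num at this ⊢
      linarith
    have h9 : Real.log (9/8 : ℝ) = 2 * Real.log 3 - 3 * Real.log 2 := by
      rw [Real.log_div (by norm_num) (by norm_num),
        show (9:ℝ) = 3^2 by norm_num, Real.log_pow, h8]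
      push_cast; ring
    rw [h9] at h98; linarith
  have hv : (2/t) * t = 2 := by field_simp
  have hu1 : Real.log 3 + 1 - (3/2)*(2/t) ≤ Real.log t := by
    have := Real.log_le_sub_one_of_pos (show (0:ℝ) < 3/t by positivity)
    rw [Real.log_div (by norm_num) (ne_of_gt htpos)] at this
    have h3t : (3/2)*(2/t) = 3/t := by field_simp
    rw [h3t]; linarith
  have hu2 : Real.log t ≤ 2*Real.log 2 + t/4 - 1 := by
    have := Real.log_le_sub_one_of_pos (show (0:ℝ) < t/4 by positivity)
    rw [Real.log_div (ne_of_gt htpos) (by norm_num), h4] at this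
    linarith
  have key := hbound19 t (Real.log 2) (Real.log 3) (Real.log t) (2/t)
    ht1 ht2 hL1 hL2 hg3 hv hu1 hu2
  rw [h8, h4]
  have hden : (0:ℝ) < (t-1)^2 := by nlinarith
  constructor
  · apply div_nonneg _ hden.le
    exact key.1
  · rw [div_le_one hden]
    calc (2*t*(4+3*Real.log 2) - (4*t*Real.log t + 2*t) - 2/t - 2*Real.log 2)*(t-1)
        - (t^2*(4+3*Real.log 2) - 2*t^2*Real.log t + (3*Real.log 2 - 2*Real.log t)
          - t*(2*Real.log 2) - 4) ≤ (t-1)^2 := key.2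

theorem stmt_19 :
    MonotoneOn (fun t : ℝ =>
        (t ^ 2 * (4 + Real.log 8) - 2 * t ^ 2 * Real.log t + Real.log (8 / t ^ 2)
          - t * Real.log 4 - 4) / (t - 1)) (Set.Icc (5/2 : ℝ) 4) ∧
    (∀ t ∈ Set.Icc (5/2 : ℝ) 4,
      0 ≤ deriv (fun t : ℝ =>
        (t ^ 2 * (4 + Real.log 8) - 2 * t ^ 2 * Real.log t + Real.log (8 / t ^ 2)
          - t * Real.log 4 - 4) / (t - 1)) t ∧
      deriv (fun t : ℝ =>
        (t ^ 2 * (4 + Real.log 8) - 2 * t ^ 2 * Real.log t + Real.log (8 / t ^ 2)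
          - t * Real.log 4 - 4) / (t - 1)) t ≤ 1) ∧
    (25/2 : ℝ) ≤ ((5/2 : ℝ) ^ 2 * (4 + Real.log 8) - 2 * (5/2 : ℝ) ^ 2 * Real.log (5/2)
        + Real.log (8 / (5/2 : ℝ) ^ 2) - (5/2 : ℝ) * Real.log 4 - 4) / ((5/2 : ℝ) - 1) := by
  refine ⟨?_, deriv19, ?_⟩
  · apply monotoneOn_of_deriv_nonneg (convex_Icc _ _)
    · intro x hx
      exact (hd19 x (by linarith [hx.1])).continuousAt.continuousWithinAt
    · intro x hx
      rw [interior_Icc] at hx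
      exact ((hd19 x (by linarith [hx.1])).differentiableAt).differentiableWithinAt
    · intro x hx
      rw [interior_Icc] at hx
      exact (deriv19 x ⟨hx.1.le, hx.2.le⟩).1
  · have h8 : Real.log 8 = 3 * Real.log 2 := by
      rw [show (8:ℝ) = 2^3 by norm_num, Real.log_pow]; push_cast; ring
    have h4 : Real.log 4 = 2 * Real.log 2 := by
      rw [show (4:ℝ) = 2^2 by norm_num, Real.log_pow]; push_cast; ring
    have h52 : Real.log (5/2 : ℝ) = Real.log 5 - Real.log 2 :=
      Real.log_div (by norm_num) (by norm_num)
    have h3225 : Real.log (8 / (5/2 : ℝ)^2) = 5 * Real.log 2 - 2 * Real.log 5 := by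
      rw [show (8 / (5/2 : ℝ)^2) = 32/25 by norm_num,
        Real.log_div (by norm_num) (by norm_num),
        show (32:ℝ) = 2^5 by norm_num, show (25:ℝ) = 5^2 by norm_num,
        Real.log_pow, Real.log_pow]
      push_cast; ring
    have hL1 : (0.6931:ℝ) ≤ Real.log 2 := le_of_lt (by
      have := Real.log_two_gt_d9; linarith)
    have h5 : Real.log 5 ≤ 2*Real.log 2 + 1/4 := by
      have := Real.log_le_sub_one_of_pos (show (0:ℝ) < 5/4 by norm_num)
      rw [Real.log_div (by norm_num) (by norm_num), h4] at this
      linarith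
    rw [h8, h4, h52, h3225, le_div_iff₀ (by norm_num)]
    nlinarith
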